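/- Let 1/2 < α < 1. The set of complex zeros of the Mittag–Leffler function z ↦ E_{2α,2}(z) = ∑_{k=0}^∞ z^k / Γ(2αk + 2) is infinite. -/

import Mathlib

open Complex

/-- Two-parameter Mittag–Leffler function of a complex variable,
`E_{δ,θ}(z) = ∑ z^k / Γ(δk + θ)`, with real parameters `δ, θ`. -/
noncomputable def mittagLefflerC (δ θ : ℝ) (z : ℂ) : ℂ :=
  ∑' k : ℕ, z ^ k / Complex.Gamma ((δ * k + θ : ℝ) : ℂ)

open Set Metric Filter intervalIntegral MeasureTheory FormalMultilinearSeries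



/-- Borel–Carathéodory type bound via the Schwarz lemma. -/
lemma bc_bound {h : ℂ → ℂ} (hd : Differentiable ℂ h) {A R : ℝ} (hA : 0 < A) (hR : 0 < R)
    (hre : ∀ w : ℂ, ‖w‖ < 2 * R → (h w - h 0).re < A) :
    ∀ z : ℂ, ‖z‖ ≤ R → ‖h z - h 0‖ ≤ 2 * A := by
  intro z hz
  set D : ℂ → ℂ := fun w => 2 * (A : ℂ) - (h w - h 0) with hD
  have hDne : ∀ w ∈ ball (0 : ℂ) (2 * R), D w ≠ 0 := by
    intro w hw
    have hw' : ‖w‖ < 2 * R := by simpa [mem_ball, dist_eq_norm] using hw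
    have := hre w hw'
    intro h0
    have : (D w).re = 0 := by rw [h0]; simp
    simp only [hD, Complex.sub_re, Complex.mul_re, Complex.ofReal_re, Complex.ofReal_im] at this
    norm_num at this
    have h2 := hre w hw'
    simp only [Complex.sub_re] at h2
    linarith
  set F : ℂ → ℂ := fun w => (h w - h 0) / D w with hF
  have hFd : DifferentiableOn ℂ F (ball (0 : ℂ) (2 * R)) := by
    apply DifferentiableOn.div
    · exact ((hd.sub_const (h 0)).differentiableOn)
    · exact (differentiable_const _ |>.sub (hd.sub_const (h 0))).differentiableOn
    · exact hDne
  have hF0 : F 0 = 0 := by simp [hF]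
  have key : ∀ w : ℂ, ‖w‖ < 2 * R → ‖F w‖ < 1 := by
    intro w hw
    have hDw : D w ≠ 0 := hDne w (by simpa [mem_ball, dist_eq_norm] using hw)
    have hlt : ‖h w - h 0‖ < ‖D w‖ := by
      have h1 : ‖h w - h 0‖ ^ 2 < ‖D w‖ ^ 2 := by
        have e1 : ‖h w - h 0‖ ^ 2 = Complex.normSq (h w - h 0) := by
          rw [← Complex.sq_norm]
        have e2 : ‖D w‖ ^ 2 = Complex.normSq (D w) := by
          rw [← Complex.sq_norm]
        rw [e1, e2]
        simp only [hD, Complex.normSq_apply, Complex.sub_re, Complex.sub_im, Complex.mul_re,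
          Complex.mul_im, Complex.ofReal_re, Complex.ofReal_im, Complex.re_ofNat, Complex.im_ofNat]
        have := hre w hw
        simp only [Complex.sub_re] at this
        nlinarith [hre w hw, sq_nonneg ((h w).im - (h 0).im)]
      exact lt_of_pow_lt_pow_left₀ 2 (norm_nonneg _) h1
    rw [hF]
    simp only []
    rw [norm_div, div_lt_one (lt_of_le_of_lt (norm_nonneg _) hlt)]
    exact hlt
  have hmaps : MapsTo F (ball (0:ℂ) (2*R)) (ball (F 0) 1) := by
    intro w hw
    have hw' : ‖w‖ < 2 * R := by simpa [mem_ball, dist_eq_norm] using hw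
    simpa [mem_ball, dist_eq_norm, hF0] using key w hw'
  have hzball : z ∈ ball (0:ℂ) (2*R) := by
    simp only [mem_ball, dist_eq_norm, sub_zero]
    linarith
  have := Complex.dist_le_div_mul_dist_of_mapsTo_ball hFd (hmaps.mono_right ball_subset_closedBall) hzball
  rw [hF0] at this
  have hFz : ‖F z‖ ≤ 1 / 2 := by
    have : dist (F z) 0 ≤ 1 / (2 * R) * dist z 0 := this
    rw [dist_eq_norm, sub_zero, dist_eq_norm, sub_zero] at this
    calc ‖F z‖ ≤ 1 / (2*R) * ‖z‖ := this
      _ ≤ 1 / (2*R) * R := by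
          apply mul_le_mul_of_nonneg_left hz
          positivity
      _ = 1/2 := by field_simp
  -- unwind: h z - h 0 = F z * D z
  have hDz : D z ≠ 0 := hDne z hzball
  have hwz : h z - h 0 = F z * D z := by
    rw [hF]; field_simp
  have hDnorm : ‖D z‖ ≤ 2 * A + ‖h z - h 0‖ := by
    calc ‖D z‖ ≤ ‖(2 * (A:ℂ))‖ + ‖h z - h 0‖ := norm_sub_le _ _
      _ = 2 * A + ‖h z - h 0‖ := by
          congr 1
          have e : (2 * (A:ℂ)) = ((2*A : ℝ) : ℂ) := by push_cast; ring
          rw [e, Complex.norm_real, Real.norm_eq_abs, abs_of_pos (by linarith)]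
  have : ‖h z - h 0‖ ≤ 1/2 * (2*A + ‖h z - h 0‖) := by
    calc ‖h z - h 0‖ = ‖F z‖ * ‖D z‖ := by rw [hwz, norm_mul]
      _ ≤ 1/2 * ‖D z‖ := by
          apply mul_le_mul_of_nonneg_right hFz (norm_nonneg _)
      _ ≤ 1/2 * (2*A + ‖h z - h 0‖) := by linarith [hDnorm]
  linarith


/-- A sublinear-growth entire function is constant. -/
lemma const_of_sublinear {h : ℂ → ℂ} (hd : Differentiable ℂ h) {B σ : ℝ}
    (hσ0 : 0 ≤ σ) (hσ1 : σ < 1) (hB : 0 < B)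
    (hb : ∀ z : ℂ, ‖h z‖ ≤ B * (1 + ‖z‖) ^ σ) : ∀ z : ℂ, h z = h 0 := by
  have hderiv : ∀ z : ℂ, deriv h z = 0 := by
    intro z
    have key : ∀ R : ℝ, 0 < R →
        ‖deriv h z‖ ≤ (2 * B * (1 + ‖z‖ + R) ^ σ + 2 * ‖h z‖ + 1) / R := by
      intro R hR
      set R₂ : ℝ := 2 * B * (1 + ‖z‖ + R) ^ σ + 2 * ‖h z‖ + 1 with hR₂
      have hmaps : MapsTo h (ball z R) (ball (h z) R₂) := by
        intro w hw
        have hw' : ‖w - z‖ < R := by simpa [mem_ball, dist_eq_norm] using hw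
        have hwn : ‖w‖ ≤ ‖z‖ + R := by
          calc ‖w‖ = ‖z + (w - z)‖ := by ring_nf
            _ ≤ ‖z‖ + ‖w - z‖ := norm_add_le _ _
            _ ≤ ‖z‖ + R := by linarith
        have h1 : ‖h w‖ ≤ B * (1 + ‖z‖ + R) ^ σ := by
          calc ‖h w‖ ≤ B * (1 + ‖w‖) ^ σ := hb w
            _ ≤ B * (1 + ‖z‖ + R) ^ σ := by
                apply mul_le_mul_of_nonneg_left _ hB.le
                apply Real.rpow_le_rpow (by positivity) (by linarith) hσ0
        have h2 : ‖h z‖ ≤ B * (1 + ‖z‖ + R) ^ σ := by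
          calc ‖h z‖ ≤ B * (1 + ‖z‖) ^ σ := hb z
            _ ≤ B * (1 + ‖z‖ + R) ^ σ := by
                apply mul_le_mul_of_nonneg_left _ hB.le
                apply Real.rpow_le_rpow (by positivity) (by linarith) hσ0
        simp only [mem_ball, dist_eq_norm]
        calc ‖h w - h z‖ ≤ ‖h w‖ + ‖h z‖ := norm_sub_le _ _
          _ < R₂ := by
              have hnn : (0:ℝ) ≤ B * (1 + ‖z‖ + R) ^ σ := by positivity
              rw [hR₂]; linarith [norm_nonneg (h z), norm_nonneg (h w)]
      have := Complex.norm_deriv_le_div_of_mapsTo_ball hd.differentiableOn (hmaps.mono_right ball_subset_closedBall) hR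
      simpa [div_eq_mul_inv] using this
    -- now let R → ∞
    have hlim : Tendsto (fun R : ℝ => (2 * B * (1 + ‖z‖ + R) ^ σ + 2 * ‖h z‖ + 1) / R)
        atTop (nhds 0) := by
      have h1 : Tendsto (fun R : ℝ => (1 + ‖z‖ + R) ^ σ / R) atTop (nhds 0) := by
        have ha : Tendsto (fun R : ℝ => 1 + ‖z‖ + R) atTop atTop :=
          tendsto_atTop_add_const_left _ _ tendsto_id
        have h2 : Tendsto (fun x : ℝ => x ^ (σ - 1)) atTop (nhds 0) := by
          have := tendsto_rpow_neg_atTop (y := 1 - σ) (by linarith)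
          simpa [neg_sub] using this
        have h3 : Tendsto (fun R : ℝ => (1 + ‖z‖ + R) ^ (σ - 1)) atTop (nhds 0) :=
          h2.comp ha
        have h4 : Tendsto (fun R : ℝ => (1 + ‖z‖ + R) / R) atTop (nhds 1) := by
          have : (fun R : ℝ => (1 + ‖z‖ + R) / R) =ᶠ[atTop] fun R => (1 + ‖z‖) / R + 1 := by
            filter_upwards [eventually_gt_atTop (0:ℝ)] with R hR
            field_simp
          rw [tendsto_congr' this]
          have ha1 : Tendsto (fun R : ℝ => (1 + ‖z‖) / R) atTop (nhds 0) :=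
            Tendsto.div_atTop tendsto_const_nhds tendsto_id
          have ha2 : Tendsto (fun _ : ℝ => (1:ℝ)) atTop (nhds 1) := tendsto_const_nhds
          simpa using ha1.add ha2
        have h5 : Tendsto (fun R : ℝ => (1 + ‖z‖ + R) ^ (σ - 1) * ((1 + ‖z‖ + R) / R))
            atTop (nhds (0 * 1)) := h3.mul h4
        rw [mul_one] at h5
        apply h5.congr'
        filter_upwards [eventually_gt_atTop (0:ℝ)] with R hR
        have hpos : (0:ℝ) < 1 + ‖z‖ + R := by positivity
        rw [Real.rpow_sub hpos, Real.rpow_one]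
        field_simp
      have h6 : Tendsto (fun R : ℝ => 2*B*((1 + ‖z‖ + R)^σ/R) + (2*‖h z‖+1)/R)
          atTop (nhds (2*B*0 + 0)) :=
        (h1.const_mul (2*B)).add (Tendsto.div_atTop tendsto_const_nhds tendsto_id)
      have h7 : (2*B*(0:ℝ) + 0) = 0 := by ring
      rw [h7] at h6
      apply h6.congr'
      filter_upwards [eventually_gt_atTop (0:ℝ)] with R hR
      field_simp
      ring
    have : ‖deriv h z‖ ≤ 0 := by
      apply ge_of_tendsto hlim
      filter_upwards [eventually_gt_atTop (0:ℝ)] with R hR using key R hR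
    simpa using le_antisymm this (norm_nonneg _)
  intro z
  exact (is_const_of_deriv_eq_zero hd hderiv z 0)


/-- The derivative of an entire function is entire. -/
lemma entire_deriv {f : ℂ → ℂ} (hd : Differentiable ℂ f) : Differentiable ℂ (deriv f) := by
  have h1 : Differentiable ℂ (fderiv ℂ f) := fun z => ((hd.analyticAt z).fderiv).differentiableAt
  have he : deriv f = fun z => (ContinuousLinearMap.apply ℂ ℂ (1:ℂ)) (fderiv ℂ f z) := by
    funext z
    simp [ContinuousLinearMap.apply_apply, fderiv_apply_one_eq_deriv]
  rw [he]
  exact (ContinuousLinearMap.apply ℂ ℂ (1:ℂ)).differentiable.comp h1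

/-- Every nonvanishing entire function has an entire logarithm. -/
lemma exists_entire_log {g : ℂ → ℂ} (hd : Differentiable ℂ g) (hne : ∀ z, g z ≠ 0) :
    ∃ h : ℂ → ℂ, Differentiable ℂ h ∧ ∀ z, g z = Complex.exp (h z) := by
  -- the logarithmic derivative
  set φ : ℂ → ℂ := fun z => deriv g z * (g z)⁻¹ with hφ
  have hφd : Differentiable ℂ φ := by
    apply Differentiable.mul (entire_deriv hd)
    exact fun z => (hd z).inv (hne z)
  have hφc : Continuous φ := hφd.continuous
  have hφ'c : Continuous (deriv φ) := (entire_deriv hφd).continuous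
  -- the primitive along segments from 0
  set F : ℂ → ℂ := fun z => ∫ t in (0:ℝ)..1, z * φ (t * z) with hFdef
  have hkey : ∀ z : ℂ, HasDerivAt F (φ z) z := by
    intro z
    obtain ⟨M₁, hM₁⟩ := (isCompact_closedBall (0:ℂ) (‖z‖+1)).exists_bound_of_continuousOn
      hφc.continuousOn
    obtain ⟨M₂, hM₂⟩ := (isCompact_closedBall (0:ℂ) (‖z‖+1)).exists_bound_of_continuousOn
      hφ'c.continuousOn
    have hmem : ∀ t : ℝ, t ∈ Set.uIoc (0:ℝ) 1 → ∀ x ∈ ball z 1,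
        (t*x : ℂ) ∈ closedBall (0:ℂ) (‖z‖+1) := by
      intro t ht x hx
      rw [Set.uIoc_of_le (by norm_num : (0:ℝ) ≤ 1)] at ht
      have hxn : ‖x‖ ≤ ‖z‖ + 1 := by
        have h5 := mem_ball_iff_norm.mp hx
        calc ‖x‖ = ‖z + (x - z)‖ := by ring_nf
          _ ≤ ‖z‖ + ‖x - z‖ := norm_add_le _ _
          _ ≤ ‖z‖ + 1 := by linarith
      simp only [mem_closedBall, dist_zero_right]
      calc ‖(t:ℂ) * x‖ = |t| * ‖x‖ := by
            rw [norm_mul, Complex.norm_real, Real.norm_eq_abs]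
        _ ≤ 1 * (‖z‖+1) := by
            apply mul_le_mul (by rw [abs_of_pos ht.1]; exact ht.2) hxn (norm_nonneg _) zero_le_one
        _ = ‖z‖ + 1 := one_mul _
    have main := hasDerivAt_integral_of_dominated_loc_of_deriv_le (𝕜 := ℂ) (μ := volume)
      (F := fun (x : ℂ) (t : ℝ) => x * φ (t * x))
      (F' := fun (x : ℂ) (t : ℝ) => φ (t * x) + t * x * deriv φ (t * x))
      (x₀ := z) (a := 0) (b := 1) (s := ball z 1) (bound := fun _ => M₁ + (‖z‖+1) * M₂)
      (ball_mem_nhds z one_pos) ?_ ?_ ?_ ?_ ?_ ?_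
    · -- conclude using FTC
      have hF' : HasDerivAt F (∫ t in (0:ℝ)..1, (φ (t*z) + t * z * deriv φ (t*z))) z := main.2
      have hFTC : (∫ t in (0:ℝ)..1, (φ (t*z) + t * z * deriv φ (t*z))) = φ z := by
        have hG : ∀ t ∈ Set.uIcc (0:ℝ) 1, HasDerivAt (fun s : ℝ => (s : ℂ) * φ (s * z))
            (φ (t*z) + t * z * deriv φ (t*z)) t := by
          intro t _
          have h1 : HasDerivAt (fun s : ℝ => (s:ℂ)) 1 t := Complex.ofRealCLM.hasDerivAt
          have h2 : HasDerivAt (fun s : ℝ => ((s:ℂ) * z)) z t := by simpa using h1.mul_const z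
          have h3 : HasDerivAt φ (deriv φ (t*z)) ((t:ℂ) * z) := (hφd _).hasDerivAt
          have h4 : HasDerivAt (fun s : ℝ => φ ((s:ℂ) * z)) (deriv φ (t*z) * z) t := by
            have := h3.scomp t h2
            simpa [smul_eq_mul, mul_comm, Function.comp_def] using this
          have h5 := h1.mul h4
          refine h5.congr_deriv ?_
          ring
        have hcont : IntervalIntegrable (fun t : ℝ => (φ (t*z) + t * z * deriv φ (t*z)))
            MeasureTheory.volume 0 1 := by
          apply Continuous.intervalIntegrable
          apply Continuous.add
          · exact hφc.comp (Complex.continuous_ofReal.mul continuous_const)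
          · exact Continuous.mul (Complex.continuous_ofReal.mul continuous_const) (hφ'c.comp (Complex.continuous_ofReal.mul continuous_const))
        rw [intervalIntegral.integral_eq_sub_of_hasDerivAt hG hcont]
        simp
      rw [← hFTC]; exact hF'
    · filter_upwards with x
      apply Continuous.aestronglyMeasurable
      exact continuous_const.mul (hφc.comp (Complex.continuous_ofReal.mul continuous_const))
    · apply Continuous.intervalIntegrable
      exact continuous_const.mul (hφc.comp (Complex.continuous_ofReal.mul continuous_const))
    · apply Continuous.aestronglyMeasurable
      apply Continuous.add
      · exact hφc.comp (Complex.continuous_ofReal.mul continuous_const)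
      · exact Continuous.mul (Complex.continuous_ofReal.mul continuous_const) (hφ'c.comp (Complex.continuous_ofReal.mul continuous_const))
    · filter_upwards with t
      intro ht x hx
      have hmem' := hmem t ht x hx
      calc ‖φ (t*x) + t * x * deriv φ (t*x)‖ ≤ ‖φ (t*x)‖ + ‖(t:ℂ) * x * deriv φ (t*x)‖ :=
            norm_add_le _ _
        _ ≤ M₁ + (‖z‖+1) * M₂ := by
            have b1 : ‖φ (t*x)‖ ≤ M₁ := hM₁ _ hmem'
            have b3 : ‖(t:ℂ) * x‖ ≤ ‖z‖ + 1 := by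
              simpa [mem_closedBall, dist_zero_right] using hmem'
            have b2 : ‖(t:ℂ) * x * deriv φ (t*x)‖ ≤ (‖z‖+1) * M₂ := by
              rw [norm_mul]
              have hM₂0 : 0 ≤ M₂ := le_trans (norm_nonneg _) (hM₂ 0 (by
                simp only [mem_closedBall, dist_self]; positivity))
              exact mul_le_mul b3 (hM₂ _ hmem') (norm_nonneg _) (by positivity)
            linarith
    · exact intervalIntegrable_const
    · filter_upwards with t
      intro ht x hx
      have h3 : HasDerivAt φ (deriv φ ((t:ℂ)*x)) ((t:ℂ) * x) := (hφd _).hasDerivAt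
      have h2 : HasDerivAt (fun y : ℂ => (t:ℂ) * y) t x := by
        simpa using (hasDerivAt_id x).const_mul (t:ℂ)
      have h4 : HasDerivAt (fun y : ℂ => φ ((t:ℂ) * y)) (deriv φ (t*x) * t) x := by
        simpa [Function.comp_def] using h3.comp x h2
      have h6 := (hasDerivAt_id x).mul h4
      refine h6.congr_deriv ?_
      simp only [id_eq]
      ring
  -- assemble the log
  set h : ℂ → ℂ := fun z => Complex.log (g 0) + F z with hh
  have hhkey : ∀ z, HasDerivAt h (φ z) z := fun z => (hkey z).const_add _
  have hhd : Differentiable ℂ h := fun z => (hhkey z).differentiableAt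
  refine ⟨h, hhd, ?_⟩
  set q : ℂ → ℂ := fun z => g z * Complex.exp (-h z) with hq
  have hqd : ∀ z, HasDerivAt q 0 z := by
    intro z
    have h2 : HasDerivAt (fun w => Complex.exp (-h w)) (-φ z * Complex.exp (-h z)) z := by
      have h7 := ((hhkey z).neg).cexp
      refine h7.congr_deriv ?_
      simp only [Pi.neg_apply]; ring
    have h3 := (hd z).hasDerivAt.mul h2
    have hgφ : g z * φ z = deriv g z := by
      rw [hφ]; field_simp
      rw [mul_comm, mul_div_assoc, div_self (hne z), mul_one]
    refine h3.congr_deriv ?_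
    rw [← hgφ]; ring
  have hqconst : ∀ z, q z = q 0 :=
    fun z => is_const_of_deriv_eq_zero (fun w => (hqd w).differentiableAt)
      (fun w => (hqd w).deriv) z 0
  have hF0 : F 0 = 0 := by
    rw [hFdef]; simp
  have hq0 : q 0 = 1 := by
    rw [hq]
    simp only [hh, hF0, add_zero, neg_add_rev, neg_zero, zero_add]
    rw [Complex.exp_neg, Complex.exp_log (hne 0)]
    field_simp
    exact div_self (hne 0)
  intro z
  have := hqconst z
  rw [hq0, hq] at this
  have hexp := Complex.exp_ne_zero (-h z)
  field_simp [Complex.exp_neg] at this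
  rw [Complex.exp_neg, ← div_eq_mul_inv, div_eq_one_iff_eq (Complex.exp_ne_zero _)] at this
  exact this


section
variable {g : ℂ → ℂ}

noncomputable def AnalyticAt.order {f : ℂ → ℂ} {b : ℂ} (_ : AnalyticAt ℂ f b) : ℕ∞ :=
  analyticOrderAt f b

lemma AnalyticAt.order_eq_top_iff {f : ℂ → ℂ} {b : ℂ} (hf : AnalyticAt ℂ f b) :
    hf.order = ⊤ ↔ ∀ᶠ z in nhds b, f z = 0 := analyticOrderAt_eq_top

lemma AnalyticAt.order_eq_nat_iff {f : ℂ → ℂ} {b : ℂ} (hf : AnalyticAt ℂ f b) (n : ℕ) :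
    hf.order = n ↔
      ∃ (g : ℂ → ℂ), AnalyticAt ℂ g b ∧ g b ≠ 0 ∧ ∀ᶠ z in nhds b, f z = (z - b) ^ n • g z :=
  hf.analyticOrderAt_eq_natCast

lemma const_of_nonvanishing {g : ℂ → ℂ} (hd : Differentiable ℂ g) (hne : ∀ z, g z ≠ 0)
    {C σ : ℝ} (hC : 0 < C) (hσ0 : 0 ≤ σ) (hσ1 : σ < 1)
    (hg : ∀ z : ℂ, ‖g z‖ ≤ Real.exp (C * (1 + ‖z‖) ^ σ)) : ∀ z, g z = g 0 := by
  obtain ⟨h, hhd, hgh⟩ := exists_entire_log hd hne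
  have hre : ∀ z : ℂ, (h z).re ≤ C * (1 + ‖z‖) ^ σ := by
    intro z
    have : Real.exp (h z).re ≤ Real.exp (C * (1 + ‖z‖) ^ σ) := by
      rw [← Complex.norm_exp, ← hgh z]
      exact hg z
    exact Real.exp_le_exp.mp this
  -- global bound on h using bc_bound
  have hhb : ∀ z : ℂ, ‖h z‖ ≤ (2*C*3^σ + 3*‖h 0‖ + 2) * (1 + ‖z‖) ^ σ := by
    intro z
    set R : ℝ := ‖z‖ + 1 with hR
    have hRpos : 0 < R := by positivity
    set A : ℝ := C * (1 + 2*R) ^ σ + ‖h 0‖ + 1 with hA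
    have hApos : 0 < A := by positivity
    have hbc := bc_bound hhd hApos hRpos (fun w hw => ?_) z (by rw [hR]; linarith)
    swap
    · -- (h w - h 0).re < A
      have h1 : (h w).re ≤ C * (1 + ‖w‖) ^ σ := hre w
      have h2 : C * (1 + ‖w‖) ^ σ ≤ C * (1 + 2*R) ^ σ := by
        apply mul_le_mul_of_nonneg_left _ hC.le
        apply Real.rpow_le_rpow (by positivity) (by linarith) hσ0
      have h3 : -(h 0).re ≤ ‖h 0‖ := by
        calc -(h 0).re ≤ |(h 0).re| := neg_le_abs _
          _ ≤ ‖h 0‖ := Complex.abs_re_le_norm _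
      simp only [Complex.sub_re]
      linarith
    -- now: ‖h z - h 0‖ ≤ 2 * A
    have hzb : ‖h z‖ ≤ ‖h 0‖ + 2*A := by
      calc ‖h z‖ = ‖h 0 + (h z - h 0)‖ := by ring_nf
        _ ≤ ‖h 0‖ + ‖h z - h 0‖ := norm_add_le _ _
        _ ≤ ‖h 0‖ + 2*A := by linarith
    -- estimate A
    have hA2 : A ≤ C * 3^σ * (1 + ‖z‖)^σ + ‖h 0‖ + 1 := by
      rw [hA]
      have : (1 + 2*R : ℝ) = 3 + 2*‖z‖ := by rw [hR]; ring
      rw [this]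
      have h4 : ((3:ℝ) + 2*‖z‖) ^ σ ≤ (3*(1+‖z‖))^σ := by
        apply Real.rpow_le_rpow (by positivity) (by linarith [norm_nonneg z]) hσ0
      have h5 : ((3:ℝ)*(1+‖z‖))^σ = 3^σ * (1+‖z‖)^σ :=
        Real.mul_rpow (by norm_num) (by positivity)
      have h6 : C * (3 + 2*‖z‖)^σ ≤ C * (3^σ * (1+‖z‖)^σ) := by
        apply mul_le_mul_of_nonneg_left _ hC.le
        rw [← h5]; exact h4
      linarith [h6]
    have hone : (1:ℝ) ≤ (1 + ‖z‖)^σ := by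
      apply Real.one_le_rpow (by linarith [norm_nonneg z]) hσ0
    calc ‖h z‖ ≤ ‖h 0‖ + 2*A := hzb
      _ ≤ ‖h 0‖ + 2*(C * 3^σ * (1 + ‖z‖)^σ + ‖h 0‖ + 1) := by linarith
      _ = 2*C*3^σ * (1+‖z‖)^σ + (3*‖h 0‖ + 2) := by ring
      _ ≤ 2*C*3^σ * (1+‖z‖)^σ + (3*‖h 0‖ + 2) * (1+‖z‖)^σ := by
          nlinarith [norm_nonneg (h 0), hone]
      _ = (2*C*3^σ + 3*‖h 0‖ + 2) * (1 + ‖z‖) ^ σ := by ring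
  have hBpos : 0 < 2*C*3^σ + 3*‖h 0‖ + 2 := by positivity
  have hconst := const_of_sublinear hhd hσ0 hσ1 hBpos hhb
  intro z
  rw [hgh z, hgh 0, hconst z]

/-- Multiplying by `(z - a)` away from `a` does not change the order of vanishing. -/
lemma order_factor_ne {f g : ℂ → ℂ} {a b : ℂ} (hf : AnalyticAt ℂ f b) (hg : AnalyticAt ℂ g b)
    (hab : b ≠ a) (heq : ∀ z, f z = (z - a) * g z) : hf.order = hg.order := by
  cases ho : hg.order with
  | top =>
    rw [AnalyticAt.order_eq_top_iff] at ho ⊢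
    filter_upwards [ho] with z hz
    rw [heq z, hz, mul_zero]
  | coe n =>
    rw [AnalyticAt.order_eq_nat_iff] at ho ⊢
    obtain ⟨u, hu, hub, hev⟩ := ho
    refine ⟨fun z => (z - a) * u z, ((analyticAt_id.sub analyticAt_const).mul hu), ?_, ?_⟩
    · exact mul_ne_zero (sub_ne_zero.mpr hab) hub
    · filter_upwards [hev] with z hz
      rw [heq z, hz]
      simp only [smul_eq_mul]
      ring
/-- Multiplying by `(z - a)` at `a` increases the order of vanishing by one. -/
lemma order_factor_at {f g : ℂ → ℂ} {a : ℂ} (hf : AnalyticAt ℂ f a) (hg : AnalyticAt ℂ g a)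
    (heq : ∀ z, f z = (z - a) * g z) : hf.order = hg.order + 1 := by
  cases ho : hg.order with
  | top =>
    rw [top_add]
    rw [AnalyticAt.order_eq_top_iff] at ho ⊢
    filter_upwards [ho] with z hz
    rw [heq z, hz, mul_zero]
  | coe n =>
    have : ((n : ℕ∞) + 1) = ((n+1 : ℕ) : ℕ∞) := by push_cast; ring
    rw [this, AnalyticAt.order_eq_nat_iff] at *
    obtain ⟨u, hu, hub, hev⟩ := ho
    refine ⟨u, hu, hub, ?_⟩
    filter_upwards [hev] with z hz
    rw [heq z, hz]
    simp only [smul_eq_mul]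
    ring

/-- An entire function that is not identically zero has finite order of vanishing everywhere. -/
lemma order_ne_top_entire {f : ℂ → ℂ} (hd : Differentiable ℂ f) {z₁ : ℂ} (hz₁ : f z₁ ≠ 0)
    (b : ℂ) : (hd.analyticAt b).order ≠ ⊤ := by
  intro htop
  rw [AnalyticAt.order_eq_top_iff] at htop
  have hAn : AnalyticOnNhd ℂ f univ := fun z _ => hd.analyticAt z
  have := hAn.eqOn_zero_of_preconnected_of_eventuallyEq_zero isPreconnected_univ
    (mem_univ b) htop (mem_univ z₁)
  exact hz₁ this

/-- Positive order at a zero. -/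
lemma order_pos_of_zero {f : ℂ → ℂ} {a : ℂ} (hf : AnalyticAt ℂ f a) (ha : f a = 0) :
    hf.order ≠ 0 := by
  intro h0
  rw [(by norm_cast : (0 : ℕ∞) = ((0:ℕ) : ℕ∞)), AnalyticAt.order_eq_nat_iff] at h0
  obtain ⟨u, hu, hub, hev⟩ := h0
  have := hev.self_of_nhds
  simp only [pow_zero, one_smul] at this
  rw [ha] at this
  exact hub this.symm

lemma dslope_entire {f : ℂ → ℂ} (hd : Differentiable ℂ f) (a : ℂ) :
    Differentiable ℂ (dslope f a) := by
  intro b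
  rcases eq_or_ne b a with rfl | hba
  · obtain ⟨p, hp⟩ := hd.analyticAt b
    have hAn : AnalyticAt ℂ (dslope f b) b := ⟨p.fslope, hp.has_fpower_series_dslope_fslope⟩
    exact hAn.differentiableAt
  · exact (differentiableAt_dslope_of_ne hba).mpr (hd b)

lemma poly_growth_of_finite_zeros {σ : ℝ} (hσ0 : 0 ≤ σ) (hσ1 : σ < 1) :
    ∀ T : ℕ, ∀ f : ℂ → ℂ, ∀ hd : Differentiable ℂ f, (∃ z₁, f z₁ ≠ 0) →
    (∃ C : ℝ, 0 < C ∧ ∀ z : ℂ, ‖f z‖ ≤ Real.exp (C * (1 + ‖z‖) ^ σ)) →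
    ∀ s : Finset ℂ, (∀ z, f z = 0 → z ∈ s) →
    (∑ b ∈ s, ((hd.analyticAt b).order.toNat)) ≤ T →
    ∃ D : ℝ, ∃ m : ℕ, 0 < D ∧ ∀ z : ℂ, ‖f z‖ ≤ D * (1 + ‖z‖) ^ m := by
  intro T
  induction T with
  | zero =>
    intro f hd hne hgr s hs hsum
    by_cases hz : ∃ a, f a = 0
    · obtain ⟨a, ha⟩ := hz
      exfalso
      have ha_in : a ∈ s := hs a ha
      obtain ⟨z₁, hz₁⟩ := hne
      have h1 : (hd.analyticAt a).order ≠ ⊤ := order_ne_top_entire hd hz₁ a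
      have h2 : (hd.analyticAt a).order ≠ 0 := order_pos_of_zero (hd.analyticAt a) ha
      have h3 : 1 ≤ ((hd.analyticAt a).order).toNat := by
        rw [Nat.one_le_iff_ne_zero]
        intro h0
        rw [ENat.toNat_eq_zero] at h0
        rcases h0 with h0 | h0
        · exact h2 h0
        · exact h1 h0
      have h4 : 1 ≤ ∑ b ∈ s, ((hd.analyticAt b).order.toNat) := by
        calc 1 ≤ ((hd.analyticAt a).order).toNat := h3
          _ ≤ ∑ b ∈ s, ((hd.analyticAt b).order.toNat) :=
            Finset.single_le_sum (f := fun b => ((hd.analyticAt b).order.toNat))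
              (fun _ _ => Nat.zero_le _) ha_in
      omega
    · push_neg at hz
      obtain ⟨C, hC, hgr'⟩ := hgr
      have hconst := const_of_nonvanishing hd hz hC hσ0 hσ1 hgr'
      refine ⟨‖f 0‖ + 1, 0, by positivity, fun z => ?_⟩
      rw [hconst z]
      simp only [pow_zero, mul_one]
      linarith [norm_nonneg (f 0)]
  | succ T IH =>
    intro f hd hne hgr s hs hsum
    by_cases hz : ∃ a, f a = 0
    swap
    · push_neg at hz
      obtain ⟨C, hC, hgr'⟩ := hgr
      have hconst := const_of_nonvanishing hd hz hC hσ0 hσ1 hgr'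
      refine ⟨‖f 0‖ + 1, 0, by positivity, fun z => ?_⟩
      rw [hconst z]
      simp only [pow_zero, mul_one]
      linarith [norm_nonneg (f 0)]
    obtain ⟨a, ha⟩ := hz
    have ha_in : a ∈ s := hs a ha
    set f1 : ℂ → ℂ := dslope f a with hf1
    have hd1 : Differentiable ℂ f1 := dslope_entire hd a
    have hfact : ∀ z, f z = (z - a) * f1 z := by
      intro z
      have h5 := sub_smul_dslope f a z
      rw [ha, sub_zero, smul_eq_mul] at h5
      exact h5.symm
    obtain ⟨z₁, hz₁⟩ := hne
    have hne1 : ∃ w, f1 w ≠ 0 := by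
      refine ⟨z₁, fun h0 => hz₁ ?_⟩
      rw [hfact z₁, h0, mul_zero]
    -- growth for f1
    obtain ⟨C, hC, hgr'⟩ := hgr
    set C' : ℝ := C * (2 + ‖a‖)^σ + C with hC'
    have hC'pos : 0 < C' := by positivity
    have honele : ∀ z : ℂ, (1:ℝ) ≤ (1 + ‖z‖)^σ := fun z =>
      Real.one_le_rpow (by linarith [norm_nonneg z]) hσ0
    have hgr1 : ∀ z : ℂ, ‖f1 z‖ ≤ Real.exp (C' * (1 + ‖z‖) ^ σ) := by
      intro z
      have hCC' : C * (1 + ‖z‖)^σ ≤ C' * (1 + ‖z‖)^σ := by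
        apply mul_le_mul_of_nonneg_right _ (by positivity)
        nlinarith [Real.rpow_nonneg (by linarith [norm_nonneg a] : (0:ℝ) ≤ 2 + ‖a‖) σ]
      by_cases hza : 1 ≤ ‖z - a‖
      · have h6 : ‖f1 z‖ ≤ ‖f z‖ := by
          rw [hfact z, norm_mul]
          exact le_mul_of_one_le_left (norm_nonneg _) hza
        calc ‖f1 z‖ ≤ ‖f z‖ := h6
          _ ≤ Real.exp (C * (1 + ‖z‖)^σ) := hgr' z
          _ ≤ Real.exp (C' * (1 + ‖z‖)^σ) := Real.exp_le_exp.mpr hCC'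
      · push_neg at hza
        have hmax : ‖f1 z‖ ≤ Real.exp (C * (2 + ‖a‖)^σ) := by
          apply Complex.norm_le_of_forall_mem_frontier_norm_le (isBounded_ball (x := a) (r := 1))
            hd1.diffContOnCl
          · intro w hw
            rw [frontier_ball a one_ne_zero] at hw
            have hw1 : ‖w - a‖ = 1 := by simpa [mem_sphere_iff_norm] using hw
            have h7 : ‖f1 w‖ = ‖f w‖ := by
              rw [hfact w, norm_mul, hw1, one_mul]
            have h8 : ‖w‖ ≤ ‖a‖ + 1 := by
              calc ‖w‖ = ‖a + (w - a)‖ := by ring_nf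
                _ ≤ ‖a‖ + ‖w - a‖ := norm_add_le _ _
                _ = ‖a‖ + 1 := by rw [hw1]
            rw [h7]
            calc ‖f w‖ ≤ Real.exp (C * (1 + ‖w‖)^σ) := hgr' w
              _ ≤ Real.exp (C * (2 + ‖a‖)^σ) := by
                  apply Real.exp_le_exp.mpr
                  apply mul_le_mul_of_nonneg_left _ hC.le
                  apply Real.rpow_le_rpow (by positivity) (by linarith) hσ0
          · exact subset_closure (by simpa [mem_ball, dist_eq_norm] using hza)
        calc ‖f1 z‖ ≤ Real.exp (C * (2 + ‖a‖)^σ) := hmax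
          _ ≤ Real.exp (C' * (1 + ‖z‖)^σ) := by
              apply Real.exp_le_exp.mpr
              have h9 : C * (2 + ‖a‖)^σ ≤ C * (2 + ‖a‖)^σ * (1 + ‖z‖)^σ := by
                nlinarith [honele z, mul_nonneg hC.le
                  (Real.rpow_nonneg (by linarith [norm_nonneg a] : (0:ℝ) ≤ 2 + ‖a‖) σ)]
              have h10 : C * (2 + ‖a‖)^σ * (1 + ‖z‖)^σ ≤ C' * (1 + ‖z‖)^σ := by
                apply mul_le_mul_of_nonneg_right _ (by positivity)
                nlinarith
              linarith
    -- zeros of f1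
    have hzero1 : ∀ z, f1 z = 0 → z ∈ s := by
      intro z h0
      rcases eq_or_ne z a with rfl | hza
      · exact ha_in
      · apply hs
        rw [hfact z, h0, mul_zero]
    -- the order sum decreases
    have hsum1 : (∑ b ∈ s, ((hd1.analyticAt b).order.toNat)) ≤ T := by
      have hfne : (hd.analyticAt a).order ≠ ⊤ := order_ne_top_entire hd hz₁ a
      have hordat : (hd.analyticAt a).order = (hd1.analyticAt a).order + 1 :=
        order_factor_at (hd.analyticAt a) (hd1.analyticAt a) hfact
      have h1ne : (hd1.analyticAt a).order ≠ ⊤ := by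
        intro htop
        rw [htop, top_add] at hordat
        exact hfne hordat
      have htoNat_a : ((hd.analyticAt a).order).toNat = ((hd1.analyticAt a).order).toNat + 1 := by
        lift (hd1.analyticAt a).order to ℕ using h1ne with n hn
        rw [hordat]
        rw [(by push_cast; ring : ((n:ℕ∞) + 1) = ((n+1 : ℕ) : ℕ∞))]
        rw [ENat.toNat_coe, ENat.toNat_coe]
      have herase : ∀ b ∈ s.erase a,
          ((hd.analyticAt b).order).toNat = ((hd1.analyticAt b).order).toNat := by
        intro b hb
        have hba : b ≠ a := Finset.ne_of_mem_erase hb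
        rw [order_factor_ne (hd.analyticAt b) (hd1.analyticAt b) hba hfact]
      have e1 : ∑ b ∈ s, ((hd.analyticAt b).order.toNat)
          = ((hd.analyticAt a).order).toNat + ∑ b ∈ s.erase a, ((hd.analyticAt b).order.toNat) :=
        (Finset.add_sum_erase s _ ha_in).symm
      have e2 : ∑ b ∈ s, ((hd1.analyticAt b).order.toNat)
          = ((hd1.analyticAt a).order).toNat + ∑ b ∈ s.erase a, ((hd1.analyticAt b).order.toNat) :=
        (Finset.add_sum_erase s _ ha_in).symm
      have e3 : ∑ b ∈ s.erase a, ((hd.analyticAt b).order.toNat)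
          = ∑ b ∈ s.erase a, ((hd1.analyticAt b).order.toNat) :=
        Finset.sum_congr rfl herase
      omega
    obtain ⟨D, m, hD, hb1⟩ := IH f1 hd1 hne1 ⟨C', hC'pos, hgr1⟩ s hzero1 hsum1
    refine ⟨D * (1 + ‖a‖), m + 1, by positivity, fun z => ?_⟩
    have h11 : ‖z - a‖ ≤ (1 + ‖a‖) * (1 + ‖z‖) := by
      have := norm_sub_le z a
      nlinarith [norm_nonneg z, norm_nonneg a, mul_nonneg (norm_nonneg a) (norm_nonneg z)]
    calc ‖f z‖ = ‖z - a‖ * ‖f1 z‖ := by rw [hfact z, norm_mul]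
      _ ≤ ((1 + ‖a‖) * (1 + ‖z‖)) * (D * (1 + ‖z‖)^m) := by
          apply mul_le_mul h11 (hb1 z) (norm_nonneg _) (by positivity)
      _ = D * (1 + ‖a‖) * (1 + ‖z‖)^(m+1) := by ring

section ML
variable {β : ℝ} (hβ1 : 1 < β) (hβ2 : β < 2)

/-- coefficients of the Mittag-Leffler function `E_{β,2}` -/
noncomputable def mlCoeff (β : ℝ) (k : ℕ) : ℝ := (Real.Gamma (β * k + 2))⁻¹

lemma mlGamma_pos (hβ1 : 1 < β) (k : ℕ) : 0 < Real.Gamma (β * k + 2) := by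
  apply Real.Gamma_pos_of_pos
  positivity

lemma mlCoeff_pos (hβ1 : 1 < β) (k : ℕ) : 0 < mlCoeff β k :=
  inv_pos.mpr (mlGamma_pos hβ1 k)

lemma mlGamma_ge (hβ1 : 1 < β) (k : ℕ) : ((k+1).factorial : ℝ) ≤ Real.Gamma (β * k + 2) := by
  have h1 : Real.Gamma ((k:ℝ) + 2) = (k+1).factorial := by
    have := Real.Gamma_nat_eq_factorial (k+1)
    rw [← this]
    congr 1
    push_cast
    ring
  rw [← h1]
  rcases eq_or_lt_of_le (by nlinarith [Nat.cast_nonneg (α := ℝ) k] : (k:ℝ) + 2 ≤ β * k + 2)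
    with heq | hlt
  · rw [heq]
  · apply le_of_lt
    apply Real.Gamma_strictMonoOn_Ici _ _ hlt
    · simp only [Set.mem_Ici]
      nlinarith [Nat.cast_nonneg (α := ℝ) k]
    · simp only [Set.mem_Ici]
      nlinarith [Nat.cast_nonneg (α := ℝ) k]

lemma mlGamma_ge_floor (hβ1 : 1 < β) (k : ℕ) :
    (((Nat.floor (β * k)) + 1).factorial : ℝ) ≤ Real.Gamma (β * k + 2) := by
  set n := Nat.floor (β * k) with hn
  have h1 : Real.Gamma ((n:ℝ) + 2) = (n+1).factorial := by
    have := Real.Gamma_nat_eq_factorial (n+1)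
    rw [← this]; congr 1; push_cast; ring
  have hfl : (n : ℝ) ≤ β * k := Nat.floor_le (by positivity)
  rw [← h1]
  rcases eq_or_lt_of_le (by linarith : (n:ℝ) + 2 ≤ β * k + 2) with heq | hlt
  · rw [heq]
  · apply le_of_lt
    apply Real.Gamma_strictMonoOn_Ici _ _ hlt
    · simp only [Set.mem_Ici]
      nlinarith [Nat.cast_nonneg (α := ℝ) n]
    · simp only [Set.mem_Ici]
      nlinarith [Nat.cast_nonneg (α := ℝ) k]

lemma mlCoeff_le_inv_factorial (hβ1 : 1 < β) (k : ℕ) : mlCoeff β k ≤ (k.factorial : ℝ)⁻¹ := by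
  apply inv_anti₀ (by positivity)
  calc (k.factorial : ℝ) ≤ ((k+1).factorial : ℝ) := by
        exact_mod_cast Nat.factorial_le (Nat.le_succ k)
    _ ≤ Real.Gamma (β * k + 2) := mlGamma_ge hβ1 k

lemma mlSummable (hβ1 : 1 < β) (r : ℝ) (hr : 0 ≤ r) :
    Summable (fun k : ℕ => r ^ k * mlCoeff β k) := by
  apply Summable.of_nonneg_of_le
    (fun k => mul_nonneg (by positivity) (mlCoeff_pos hβ1 k).le)
    (fun k => ?_) (Real.summable_pow_div_factorial r)
  calc r ^ k * mlCoeff β k ≤ r ^ k * (k.factorial : ℝ)⁻¹ := by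
        apply mul_le_mul_of_nonneg_left (mlCoeff_le_inv_factorial hβ1 k) (by positivity)
    _ = r ^ k / k.factorial := by rw [div_eq_mul_inv]

/-- the key term bound, for `r ≥ 1` -/
lemma mlTerm_le (hβ1 : 1 < β) {r : ℝ} (hr : 1 ≤ r) (k : ℕ) :
    r ^ k * mlCoeff β k ≤ Real.exp (2 * r ^ (1/β)) * (1/2) ^ k := by
  set n := Nat.floor (β * k) with hn
  have hβ0 : (0:ℝ) < β := by linarith
  have hkn : k ≤ n := by
    apply Nat.le_floor
    nlinarith [Nat.cast_nonneg (α := ℝ) k]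
  have hup : β * k ≤ (n:ℝ) + 1 := le_of_lt (Nat.lt_floor_add_one _)
  set x := r ^ (1/β) with hx
  have hx1 : 1 ≤ x := Real.one_le_rpow hr (by positivity)
  -- r^k ≤ x^(n+1)
  have h1 : r ^ k ≤ x ^ (n+1) := by
    have e1 : r ^ k = x ^ (β * k) := by
      rw [hx, ← Real.rpow_natCast r k, ← Real.rpow_mul (by linarith)]
      congr 1
      field_simp
    have e2 : x ^ (β * k) ≤ x ^ ((n:ℝ) + 1) := Real.rpow_le_rpow_of_exponent_le hx1 hup
    have e3 : x ^ ((n:ℝ) + 1) = x ^ (n+1) := by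
      rw [← Real.rpow_natCast x (n+1)]
      congr 1
      push_cast; ring
    rw [e1, ← e3]
    exact e2
  -- mlCoeff ≤ 1/(n+1)!
  have h2 : mlCoeff β k ≤ (((n+1).factorial : ℝ))⁻¹ := by
    apply inv_anti₀ (by positivity)
    exact mlGamma_ge_floor hβ1 k
  have hfac : (0:ℝ) < ((n+1).factorial : ℝ) := by positivity
  calc r ^ k * mlCoeff β k ≤ x ^ (n+1) * (((n+1).factorial : ℝ))⁻¹ := by
        apply mul_le_mul h1 h2 (le_of_lt (mlCoeff_pos hβ1 k)) (by positivity)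
    _ = (2*x) ^ (n+1) / ((n+1).factorial : ℝ) * (1/2)^(n+1) := by
        rw [mul_pow]
        field_simp
        ring
        rw [← mul_pow]; norm_num
    _ ≤ Real.exp (2*x) * (1/2)^(n+1) := by
        have hb := Real.pow_div_factorial_le_exp (x := 2*x) (by nlinarith) (n+1)
        exact mul_le_mul_of_nonneg_right hb (by positivity)
    _ ≤ Real.exp (2*x) * (1/2)^k := by
        apply mul_le_mul_of_nonneg_left _ (Real.exp_nonneg _)
        apply pow_le_pow_of_le_one (by norm_num) (by norm_num)
        omega
end ML

section ML2
variable {β : ℝ}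

lemma mlSum_le (hβ1 : 1 < β) (r : ℝ) (hr : 0 ≤ r) :
    (∑' k : ℕ, r ^ k * mlCoeff β k) ≤ Real.exp (4 * (1 + r) ^ (1/β)) := by
  have hβ0 : (0:ℝ) < β := by linarith
  have key : ∀ u : ℝ, 1 ≤ u → (∑' k : ℕ, u ^ k * mlCoeff β k) ≤ 2 * Real.exp (2 * u ^ (1/β)) := by
    intro u hu
    have hsum2 : Summable (fun k : ℕ => Real.exp (2 * u ^ (1/β)) * (1/2:ℝ) ^ k) :=
      (summable_geometric_of_lt_one (by norm_num) (by norm_num)).mul_left _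
    calc (∑' k : ℕ, u ^ k * mlCoeff β k)
        ≤ (∑' k : ℕ, Real.exp (2 * u ^ (1/β)) * (1/2:ℝ) ^ k) := by
          apply Summable.tsum_le_tsum (fun k => ?_) (mlSummable hβ1 u (by linarith)) hsum2
          have := mlTerm_le hβ1 hu k
          linarith
      _ = Real.exp (2 * u ^ (1/β)) * (∑' k : ℕ, (1/2:ℝ) ^ k) := tsum_mul_left
      _ = Real.exp (2 * u ^ (1/β)) * 2 := by
          rw [tsum_geometric_of_lt_one (by norm_num) (by norm_num)]
          norm_num
      _ = 2 * Real.exp (2 * u ^ (1/β)) := by ring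
  have hone : (1:ℝ) ≤ (1+r) ^ (1/β) := Real.one_le_rpow (by linarith) (by positivity)
  by_cases hr1 : 1 ≤ r
  · have h1 := key r hr1
    have h2 : r ^ (1/β) ≤ (1+r) ^ (1/β) :=
      Real.rpow_le_rpow (by linarith) (by linarith) (by positivity)
    calc (∑' k : ℕ, r ^ k * mlCoeff β k) ≤ 2 * Real.exp (2 * r ^ (1/β)) := h1
      _ ≤ Real.exp (1 + 2 * r ^ (1/β)) := by
          rw [Real.exp_add]
          apply mul_le_mul_of_nonneg_right _ (Real.exp_nonneg _)
          exact le_trans (by norm_num) (Real.add_one_le_exp 1)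
      _ ≤ Real.exp (4 * (1+r) ^ (1/β)) := by
          apply Real.exp_le_exp.mpr
          linarith
  · push_neg at hr1
    have hmono : (∑' k : ℕ, r ^ k * mlCoeff β k) ≤ (∑' k : ℕ, (1:ℝ) ^ k * mlCoeff β k) := by
      apply Summable.tsum_le_tsum (fun k => ?_) (mlSummable hβ1 r hr) (mlSummable hβ1 1 (by norm_num))
      apply mul_le_mul_of_nonneg_right _ (mlCoeff_pos hβ1 k).le
      exact pow_le_pow_left₀ hr (by linarith) k
    have h1 := key 1 le_rfl
    have h3 : Real.exp (2 * (1:ℝ) ^ (1/β)) = Real.exp 2 := by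
      rw [Real.one_rpow]; norm_num
    calc (∑' k : ℕ, r ^ k * mlCoeff β k) ≤ 2 * Real.exp 2 := by
          rw [← h3]; exact le_trans hmono h1
      _ ≤ Real.exp (1 + 2) := by
          rw [Real.exp_add]
          apply mul_le_mul_of_nonneg_right _ (Real.exp_nonneg _)
          exact le_trans (by norm_num) (Real.add_one_le_exp 1)
      _ ≤ Real.exp (4 * (1+r) ^ (1/β)) := by
          apply Real.exp_le_exp.mpr
          linarith
end ML2


section ML3
variable {β : ℝ}

lemma ml_eq_sum (z : ℂ) :
    mittagLefflerC β 2 z = ∑' k : ℕ, ((mlCoeff β k : ℝ) : ℂ) * z ^ k := by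
  apply tsum_congr
  intro k
  rw [Complex.Gamma_ofReal, mlCoeff]
  rw [div_eq_mul_inv, mul_comm]
  push_cast
  ring

lemma ml_norm_le (hβ1 : 1 < β) (z : ℂ) :
    ‖mittagLefflerC β 2 z‖ ≤ Real.exp (4 * (1 + ‖z‖) ^ (1/β)) := by
  rw [ml_eq_sum]
  have hsum : Summable (fun k : ℕ => ‖((mlCoeff β k : ℝ) : ℂ) * z ^ k‖) := by
    have heq : (fun k : ℕ => ‖((mlCoeff β k : ℝ) : ℂ) * z ^ k‖)
        = fun k : ℕ => ‖z‖ ^ k * mlCoeff β k := by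
      funext k
      rw [norm_mul, Complex.norm_real, Real.norm_eq_abs, abs_of_pos (mlCoeff_pos hβ1 k),
        norm_pow, mul_comm]
    rw [heq]
    exact mlSummable hβ1 ‖z‖ (norm_nonneg z)
  calc ‖∑' k : ℕ, ((mlCoeff β k : ℝ) : ℂ) * z ^ k‖
      ≤ ∑' k : ℕ, ‖((mlCoeff β k : ℝ) : ℂ) * z ^ k‖ := norm_tsum_le_tsum_norm hsum
    _ = ∑' k : ℕ, ‖z‖ ^ k * mlCoeff β k := by
        apply tsum_congr
        intro k
        rw [norm_mul, Complex.norm_real, Real.norm_eq_abs, abs_of_pos (mlCoeff_pos hβ1 k),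
          norm_pow, mul_comm]
    _ ≤ Real.exp (4 * (1 + ‖z‖) ^ (1/β)) := mlSum_le hβ1 ‖z‖ (norm_nonneg z)

lemma ml_diff (hβ1 : 1 < β) : Differentiable ℂ (mittagLefflerC β 2) := by
  set p : FormalMultilinearSeries ℂ ℂ ℂ := ofScalars ℂ (fun k => ((mlCoeff β k : ℝ) : ℂ)) with hp
  have hnorm : ∀ n : ℕ, ‖p n‖ = mlCoeff β n := by
    intro n
    rw [hp, ofScalars_norm, Complex.norm_real, Real.norm_eq_abs, abs_of_pos (mlCoeff_pos hβ1 n)]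
  have hrad : p.radius = ⊤ := by
    apply FormalMultilinearSeries.radius_eq_top_of_summable_norm
    intro r
    have heq : (fun n : ℕ => ‖p n‖ * (r:ℝ) ^ n) = fun n : ℕ => (r:ℝ) ^ n * mlCoeff β n := by
      funext n
      rw [hnorm n, mul_comm]
    rw [heq]
    exact mlSummable hβ1 r r.coe_nonneg
  have hfun : mittagLefflerC β 2 = p.sum := by
    funext z
    rw [ml_eq_sum]
    apply tsum_congr
    intro k
    rw [hp, ofScalars_apply_eq]
    rw [smul_eq_mul]
  have hball : HasFPowerSeriesOnBall p.sum p 0 p.radius :=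
    p.hasFPowerSeriesOnBall (by rw [hrad]; exact ENNReal.zero_lt_top)
  rw [hfun]
  intro z
  have hz : z ∈ EMetric.ball (0:ℂ) p.radius := by
    rw [hrad]
    exact EMetric.mem_ball.mpr (edist_lt_top _ _)
  exact (hball.analyticAt_of_mem hz).differentiableAt

lemma ml_lower (hβ1 : 1 < β) {r : ℝ} (hr : 0 ≤ r) (m : ℕ) :
    r ^ m * mlCoeff β m ≤ ‖mittagLefflerC β 2 (r:ℂ)‖ := by
  rw [ml_eq_sum]
  have heq : (∑' k : ℕ, ((mlCoeff β k : ℝ) : ℂ) * (r:ℂ) ^ k)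
      = (((∑' k : ℕ, r ^ k * mlCoeff β k : ℝ)) : ℂ) := by
    rw [Complex.ofReal_tsum]
    apply tsum_congr
    intro k
    push_cast
    ring
  rw [heq, Complex.norm_real, Real.norm_eq_abs]
  have hnonneg : 0 ≤ ∑' k : ℕ, r ^ k * mlCoeff β k :=
    tsum_nonneg (fun k => mul_nonneg (by positivity) (mlCoeff_pos hβ1 k).le)
  rw [_root_.abs_of_nonneg hnonneg]
  exact Summable.le_tsum (mlSummable hβ1 r hr) m
    (fun k _ => mul_nonneg (by positivity) (mlCoeff_pos hβ1 k).le)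
end ML3

theorem stmt14 (α : ℝ) (hα : 1 / 2 < α ∧ α < 1) :
    {z : ℂ | mittagLefflerC (2 * α) 2 z = 0}.Infinite := by
  obtain ⟨hα1, hα2⟩ := hα
  set β : ℝ := 2 * α with hβ
  have hβ1 : 1 < β := by rw [hβ]; linarith
  set σ : ℝ := 1/β with hσ
  have hβ0 : (0:ℝ) < β := by linarith
  have hσ0 : 0 ≤ σ := by positivity
  have hσ1 : σ < 1 := by rw [hσ, div_lt_one hβ0]; linarith
  by_contra hinf
  rw [Set.not_infinite] at hinf
  set f := mittagLefflerC β 2 with hf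
  have hd : Differentiable ℂ f := ml_diff hβ1
  have hne : ∃ z₁, f z₁ ≠ 0 := by
    refine ⟨0, fun h0 => ?_⟩
    have hlow0 := ml_lower hβ1 (le_refl (0:ℝ)) 0
    rw [Complex.ofReal_zero] at hlow0
    rw [hf] at h0
    rw [h0] at hlow0
    simp only [pow_zero, one_mul, norm_zero] at hlow0
    exact absurd hlow0 (not_le.mpr (mlCoeff_pos hβ1 0))
  have hgr : ∃ C : ℝ, 0 < C ∧ ∀ z : ℂ, ‖f z‖ ≤ Real.exp (C * (1 + ‖z‖) ^ σ) :=
    ⟨4, by norm_num, fun z => ml_norm_le hβ1 z⟩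
  set s := hinf.toFinset with hs_def
  have hs : ∀ z, f z = 0 → z ∈ s := fun z hz => hinf.mem_toFinset.mpr hz
  obtain ⟨D, m, hD, hpoly⟩ := poly_growth_of_finite_zeros hσ0 hσ1
    (∑ b ∈ s, ((hd.analyticAt b).order.toNat)) f hd hne hgr s hs le_rfl
  -- derive a contradiction from polynomial growth vs the lower bound
  set G : ℝ := Real.Gamma (β * ((m+1 : ℕ) : ℝ) + 2) with hG_def
  have hG : 0 < G := mlGamma_pos hβ1 (m+1)
  set r : ℝ := max 1 (D * G * 2^m + 1) with hr
  have hr1 : 1 ≤ r := le_max_left _ _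
  have hr2 : D * G * 2^m + 1 ≤ r := le_max_right _ _
  have hr0 : (0:ℝ) ≤ r := by linarith
  have hlow := ml_lower hβ1 hr0 (m+1)
  have hup := hpoly ((r:ℝ):ℂ)
  have hnorm_r : ‖((r:ℝ):ℂ)‖ = r := by
    rw [Complex.norm_real, Real.norm_eq_abs, abs_of_pos (by linarith)]
  rw [hnorm_r] at hup
  have h1 : r^(m+1) * mlCoeff β (m+1) ≤ D * (1+r)^m := le_trans hlow hup
  have h2 : (1+r:ℝ)^m ≤ 2^m * r^m := by
    calc (1+r:ℝ)^m ≤ (2*r)^m := pow_le_pow_left₀ (by linarith) (by linarith) m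
      _ = 2^m * r^m := mul_pow 2 r m
  have h3 : mlCoeff β (m+1) = G⁻¹ := rfl
  have h4 : r^(m+1) * G⁻¹ ≤ D * (2^m * r^m) := by
    calc r^(m+1) * G⁻¹ = r^(m+1) * mlCoeff β (m+1) := by rw [h3]
      _ ≤ D * (1+r)^m := h1
      _ ≤ D * (2^m * r^m) := by
          apply mul_le_mul_of_nonneg_left _ hD.le
          exact h2
  have h5 : r^(m+1) ≤ D * (2^m * r^m) * G := by
    have := mul_le_mul_of_nonneg_right h4 hG.le
    rwa [mul_assoc, inv_mul_cancel₀ hG.ne', mul_one] at this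
  have hq : (0:ℝ) < r^m := by positivity
  have h6 : r * r^m ≤ (D * 2^m * G) * r^m := by
    calc r * r^m = r^(m+1) := (pow_succ' r m).symm
      _ ≤ D * (2^m * r^m) * G := h5
      _ = (D * 2^m * G) * r^m := by ring
  have h7 : r ≤ D * 2^m * G := le_of_mul_le_mul_right
    (by rw [mul_comm r (r^m), mul_comm _ (r^m)] at h6 ⊢; exact h6) hq
  have : D * G * 2^m = D * 2^m * G := by ring
  linarith
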